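/- Let p ≥ 1, let a_1,…,a_p ∈ ℂ, and let A be the p×p companion matrix with first row (a_1,…,a_p), entries A_{r+1,r} = 1 for r = 1,…,p−1, and all other entries 0. Suppose λ_1,…,λ_p ∈ ℂ are pairwise distinct and satisfy λ^p − a_1 λ^{p−1} − ⋯ − a_p = ∏_{i=1}^p (λ − λ_i). Fix ω ≥ 1 and k ∈ {1,…,p}. Let V be the p×p Vandermonde matrix with entries V_{r,j} = λ_j^{p−r}, and let W be the p×p matrix whose rows are given by W_{1,j} = λ_j^{p−1+ω}, W_{r,j} = λ_j^{p−r+1} for 2 ≤ r ≤ k, and W_{r,j} = λ_j^{p−r} for k+1 ≤ r ≤ p. Then (A^ω)_{1,k} · det(V) = (−1)^{k−1} det(W). -/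

import Mathlib

open Matrix BigOperators Finset

/-- The `p × p` companion matrix with first row `a` and ones on the subdiagonal. -/
def companion (p : ℕ) (a : Fin p → ℂ) : Matrix (Fin p) (Fin p) ℂ :=
  Matrix.of fun r c => if (r : ℕ) = 0 then a c else if (r : ℕ) = (c : ℕ) + 1 then 1 else 0

lemma det_updateRow_one {n : ℕ} (k : Fin n) (v : Fin n → ℂ) :
    (updateRow (1 : Matrix (Fin n) (Fin n) ℂ) k v).det = v k := by
  rw [← det_transpose, ← updateCol_transpose, transpose_one]
  calc ((1 : Matrix (Fin n) (Fin n) ℂ).updateCol k v).det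
      = cramer (1 : Matrix (Fin n) (Fin n) ℂ) v k := (cramer_apply _ _ _).symm
    _ = v k := by rw [cramer_one]; rfl

theorem stmt7 (p : ℕ) (hp : 0 < p) (a : Fin p → ℂ) (lam : Fin p → ℂ)
    (hdist : Function.Injective lam)
    (hroots : ∀ z : ℂ, z ^ p - ∑ k : Fin p, a k * z ^ (p - 1 - (k : ℕ))
      = ∏ i : Fin p, (z - lam i))
    (ω : ℕ) (hω : 1 ≤ ω) (k : Fin p)
    (V W : Matrix (Fin p) (Fin p) ℂ)
    (hV : ∀ r j : Fin p, V r j = lam j ^ (p - 1 - (r : ℕ)))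
    (hW : ∀ r j : Fin p, W r j =
      if (r : ℕ) = 0 then lam j ^ (p - 1 + ω)
      else if (r : ℕ) ≤ (k : ℕ) then lam j ^ (p - (r : ℕ))
      else lam j ^ (p - 1 - (r : ℕ))) :
    ((companion p a) ^ ω) ⟨0, hp⟩ k * V.det = (-1 : ℂ) ^ (k : ℕ) * W.det := by
  obtain ⟨q, rfl⟩ : ∃ q, p = q + 1 := ⟨p - 1, (Nat.succ_pred_eq_of_pos hp).symm⟩
  set A := companion (q + 1) a with hA
  -- eigenvalue equation for each lam j
  have hlam : ∀ j : Fin (q + 1),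
      lam j ^ (q + 1) = ∑ c : Fin (q + 1), a c * lam j ^ (q + 1 - 1 - (c : ℕ)) := by
    intro j
    have h := hroots (lam j)
    have hz : ∏ i : Fin (q + 1), (lam j - lam i) = 0 :=
      Finset.prod_eq_zero (Finset.mem_univ j) (sub_self _)
    rw [hz] at h
    linear_combination h
  -- A * V = V * diagonal lam
  have hAV : A * V = V * diagonal lam := by
    ext r j
    rw [mul_apply, mul_diagonal]
    rcases Nat.eq_zero_or_pos (r : ℕ) with h0 | h0
    · have he : ∀ c : Fin (q + 1), A r c * V c j = a c * lam j ^ (q + 1 - 1 - (c : ℕ)) := by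
        intro c; rw [hV, hA, companion]; simp [h0, show r = 0 from Fin.ext h0]
      rw [Finset.sum_congr rfl (fun c _ => he c), ← hlam j, hV, h0]
      rw [show q + 1 - 1 - 0 = q from rfl, ← pow_succ]
    · have hr1 : (r : ℕ) - 1 < q + 1 := lt_of_le_of_lt (Nat.sub_le _ _) r.isLt
      rw [Finset.sum_eq_single (⟨(r : ℕ) - 1, hr1⟩ : Fin (q + 1))]
      · rw [hV, hA, companion]
        simp only [of_apply]
        rw [if_neg h0.ne', if_pos (by omega), one_mul, hV,
            show q + 1 - 1 - ((r:ℕ) - 1) = (q + 1 - 1 - (r:ℕ)) + 1 by omega, pow_succ]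
      · intro c _ hc
        rw [hA, companion]
        simp only [of_apply]
        rw [if_neg h0.ne', if_neg, zero_mul]
        intro hrc
        exact hc (by apply Fin.ext; simp; omega)
      · intro h; exact absurd (Finset.mem_univ _) h
  -- A^n * V = V * diagonal (lam ^ n)
  have hpow : ∀ n : ℕ, A ^ n * V = V * diagonal (fun j => lam j ^ n) := by
    intro n
    induction n with
    | zero => simp [Matrix.diagonal_one]
    | succ m ih =>
      rw [pow_succ, Matrix.mul_assoc, hAV, ← Matrix.mul_assoc, ih, Matrix.mul_assoc,
        diagonal_mul_diagonal]
      simp [pow_succ]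
  -- the key row identity
  have hrow : ∀ j : Fin (q + 1),
      ∑ c : Fin (q + 1), (A ^ ω) ⟨0, hp⟩ c * V c j = lam j ^ (q + 1 - 1 + ω) := by
    intro j
    have h := congrFun (congrFun (hpow ω) ⟨0, hp⟩) j
    rw [mul_apply, mul_diagonal] at h
    rw [h, hV, pow_add]
    norm_num
  set U := updateRow V k (fun j => lam j ^ (q + 1 - 1 + ω)) with hUdef
  set C := updateRow (1 : Matrix (Fin (q+1)) (Fin (q+1)) ℂ) k (fun c => (A ^ ω) ⟨0, hp⟩ c)
    with hCdef
  have hCV : C * V = U := by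
    ext r j
    rw [mul_apply]
    by_cases hr : r = k
    · subst hr
      simp only [hCdef, updateRow_self]
      rw [hrow j, hUdef, updateRow_self]
    · have he : ∀ c, C r c * V c j = (1 : Matrix (Fin (q+1)) (Fin (q+1)) ℂ) r c * V c j := by
        intro c; rw [hCdef, updateRow_ne hr]
      rw [Finset.sum_congr rfl (fun c _ => he c), ← mul_apply, Matrix.one_mul,
        hUdef, updateRow_ne hr]
  have hdetU : U.det = (A ^ ω) ⟨0, hp⟩ k * V.det := by
    rw [← hCV, det_mul, hCdef, det_updateRow_one]
  -- permutation relating W and U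
  set σ : Equiv.Perm (Fin (q + 1)) := (Fin.cycleRange k)⁻¹ with hσ
  have hWU : W = U.submatrix σ id := by
    ext r j
    rw [submatrix_apply, id, hW]
    by_cases h0 : (r : ℕ) = 0
    · have hr0 : r = 0 := Fin.ext h0
      have hs : σ r = k := by
        rw [hσ, hr0, Equiv.Perm.inv_eq_iff_eq, Fin.cycleRange_self]
      rw [if_pos h0, hs, hUdef, updateRow_self]
    · by_cases hrk : (r : ℕ) ≤ (k : ℕ)
      · have hpos : 0 < (r : ℕ) := Nat.pos_of_ne_zero h0
        have hr1 : (r : ℕ) - 1 < q + 1 := lt_of_le_of_lt (Nat.sub_le _ _) r.isLt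
        set r' : Fin (q + 1) := ⟨(r : ℕ) - 1, hr1⟩ with hr'
        have hr'k : r' < k := by
          rw [Fin.lt_iff_val_lt_val]; simp [hr']; omega
        have hs : σ r = r' := by
          rw [hσ, Equiv.Perm.inv_eq_iff_eq, Fin.cycleRange_of_lt hr'k]
          apply Fin.ext
          rw [Fin.val_add_one_of_lt (lt_of_lt_of_le hr'k (Fin.le_last k))]
          simp [hr']; omega
        rw [if_neg h0, if_pos hrk, hs, hUdef, updateRow_ne (Fin.ne_of_lt hr'k), hV]
        congr 1
        simp [hr']; omega
      · have hkr : k < r := by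
          rw [Fin.lt_iff_val_lt_val]; omega
        have hs : σ r = r := by
          rw [hσ, Equiv.Perm.inv_eq_iff_eq, Fin.cycleRange_of_gt hkr]
        rw [if_neg h0, if_neg hrk, hs, hUdef, updateRow_ne (Fin.ne_of_gt hkr), hV]
  have hdetW : W.det = (-1 : ℂ) ^ (k : ℕ) * U.det := by
    rw [hWU, Matrix.det_permute]
    congr 1
    rw [hσ, Equiv.Perm.sign_inv, Fin.sign_cycleRange]
    simp
  rw [hdetW, hdetU, ← mul_assoc, ← mul_pow]
  simp
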